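/- An order ≺ on {1,...,n} is a unit interval order (i.e., arises from n unit intervals I_1,...,I_n numbered left to right with i ≺ j iff I_i lies strictly to the left of I_j) if and only if for all x, y: (1) x ≺ y implies x < y, and (2) x ≺ y implies x' ≺ y' for all x' ≤ x and y' ≥ y. -/

import Mathlib

/-- A unit interval order on `Fin n`: `x ≺ y` implies `x < y`, and
`x ≺ y` implies `x' ≺ y'` for all `x' ≤ x` and `y' ≥ y`. -/
def IsUIO {n : ℕ} (r : Fin n → Fin n → Prop) : Prop :=
  (∀ x y, r x y → x < y) ∧
  (∀ x y, r x y → ∀ x' y', x' ≤ x → y ≤ y' → r x' y')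

lemma exists_good {n : ℕ} (r : Fin n → Fin n → Prop) (h : IsUIO r) :
    ∃ f : Fin n → ℝ, StrictMono f ∧
      ∀ i j, (r i j → f i + 1 < f j) ∧ (¬ r i j → f j < f i + 1) := by
  classical
  induction n with
  | zero => exact ⟨Fin.elim0, fun i => i.elim0, fun i => i.elim0⟩
  | succ n ih =>
    obtain ⟨f', hmono, hf'⟩ := ih (fun i j => r i.castSucc j.castSucc)
      ⟨fun x y hxy => by
          simpa [Fin.castSucc_lt_castSucc_iff] using h.1 _ _ hxy,
       fun x y hxy x' y' hx hy => h.2 _ _ hxy _ _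
          (Fin.castSucc_le_castSucc_iff.mpr hx) (Fin.castSucc_le_castSucc_iff.mpr hy)⟩
    set P : Fin n → Prop := fun i => r i.castSucc (Fin.last n) with hP
    have hex : ∃ c : ℝ, (∀ i : Fin n, f' i < c) ∧
        ∀ i : Fin n, (P i → f' i + 1 < c) ∧ (¬ P i → c < f' i + 1) := by
      set g : Fin n → ℝ := fun i => if P i then f' i + 1 else f' i with hg
      have hge : ∀ i, f' i ≤ g i := by
        intro i; simp only [hg]; split <;> linarith
      have key : ∀ i j, ¬ P j → g i < f' j + 1 := by
        intro i j hj
        by_cases hi : P i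
        · have hij : i < j := by
            by_contra hle
            push_neg at hle
            exact hj (h.2 _ _ hi _ _ (Fin.castSucc_le_castSucc_iff.mpr hle) le_rfl)
          simp only [hg, if_pos hi]
          linarith [hmono hij]
        · simp only [hg, if_neg hi]
          rcases le_or_gt i j with hle | hlt
          · linarith [hmono.monotone hle]
          · have hnr : ¬ r j.castSucc i.castSucc := fun hr =>
              hj (h.2 _ _ hr _ _ le_rfl (Fin.le_last _))
            linarith [(hf' j i).2 hnr]
      rcases isEmpty_or_nonempty (Fin n) with he | hne
      · exact ⟨0, fun i => he.elim i, fun i => he.elim i⟩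
      · have hu : (Finset.univ : Finset (Fin n)).Nonempty := Finset.univ_nonempty
        set A : ℝ := Finset.univ.sup' hu g with hA
        have hAg : ∀ i, g i ≤ A := fun i => Finset.le_sup' g (Finset.mem_univ i)
        set U : Finset (Fin n) := Finset.univ.filter (fun j => ¬ P j) with hUdef
        by_cases hU : U.Nonempty
        · set B : ℝ := U.inf' hU (fun j => f' j + 1) with hB
          have hAB : A < B := by
            rw [hA, Finset.sup'_lt_iff]
            intro i _
            rw [hB, Finset.lt_inf'_iff]
            intro j hj
            exact key i j (Finset.mem_filter.mp hj).2
          refine ⟨(A + B) / 2, ?_, ?_⟩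
          · intro i; have := hge i; have := hAg i; linarith
          · intro i
            constructor
            · intro hi
              have : g i = f' i + 1 := if_pos hi
              have := hAg i; linarith
            · intro hi
              have hmem : i ∈ U := Finset.mem_filter.mpr ⟨Finset.mem_univ i, hi⟩
              have := Finset.inf'_le (fun j => f' j + 1) hmem
              rw [← hB] at this
              linarith
        · have hall : ∀ i, P i := by
            intro i
            by_contra hi
            exact hU ⟨i, Finset.mem_filter.mpr ⟨Finset.mem_univ i, hi⟩⟩
          refine ⟨A + 1, ?_, ?_⟩
          · intro i; have := hge i; have := hAg i; linarith
          · intro i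
            refine ⟨fun hi => ?_, fun hi => absurd (hall i) hi⟩
            have : g i = f' i + 1 := if_pos hi
            have := hAg i; linarith
    obtain ⟨c, hc1, hc2⟩ := hex
    refine ⟨Fin.lastCases c f', ?_, ?_⟩
    · intro i j hij
      by_cases hj : j = Fin.last n
      · subst hj
        obtain ⟨i', rfl⟩ := Fin.exists_castSucc_eq.mpr (Fin.ne_of_lt hij)
        simpa using hc1 i'
      · obtain ⟨j', rfl⟩ := Fin.exists_castSucc_eq.mpr hj
        have hi : i ≠ Fin.last n := Fin.ne_of_lt (lt_trans hij (Fin.castSucc_lt_last j'))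
        obtain ⟨i', rfl⟩ := Fin.exists_castSucc_eq.mpr hi
        simpa using hmono (Fin.castSucc_lt_castSucc_iff.mp hij)
    · intro i j
      by_cases hi : i = Fin.last n
      · subst hi
        by_cases hj : j = Fin.last n
        · subst hj
          refine ⟨fun hr => absurd (h.1 _ _ hr) (lt_irrefl _), fun _ => by simp⟩
        · obtain ⟨j', rfl⟩ := Fin.exists_castSucc_eq.mpr hj
          refine ⟨fun hr => absurd (h.1 _ _ hr) ?_, fun _ => ?_⟩
          · exact not_lt_of_ge (le_of_lt (Fin.castSucc_lt_last j'))
          · simp only [Fin.lastCases_castSucc, Fin.lastCases_last]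
            linarith [hc1 j']
      · obtain ⟨i', rfl⟩ := Fin.exists_castSucc_eq.mpr hi
        by_cases hj : j = Fin.last n
        · subst hj
          simpa using hc2 i'
        · obtain ⟨j', rfl⟩ := Fin.exists_castSucc_eq.mpr hj
          simpa using hf' i' j'

/-- An order on `{1,…,n}` is a unit interval order — i.e. arises
from `n` unit intervals numbered left to right (monotone left endpoints `f`),
with `i ≺ j` iff `I i` lies strictly to the left of `I j` (`f i + 1 < f j`) —
if and only if it satisfies the two combinatorial properties. -/
theorem unit_interval_order_iff {n : ℕ} (r : Fin n → Fin n → Prop) :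
    (∃ f : Fin n → ℝ, Monotone f ∧ ∀ i j, r i j ↔ f i + 1 < f j) ↔ IsUIO r := by
  constructor
  · rintro ⟨f, hf, hiff⟩
    refine ⟨fun x y hxy => ?_, fun x y hxy x' y' hx hy => ?_⟩
    · have h1 := (hiff x y).mp hxy
      by_contra hle
      push_neg at hle
      have := hf hle
      linarith
    · rw [hiff] at hxy ⊢
      have h1 := hf hx
      have h2 := hf hy
      linarith
  · intro h
    obtain ⟨f, hmono, hf⟩ := exists_good r h
    refine ⟨f, hmono.monotone, fun i j => ⟨(hf i j).1, fun hlt => ?_⟩⟩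
    by_contra hr
    have := (hf i j).2 hr
    linarith
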